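/- Let S be a bounded nonnegative self-adjoint operator on a Hilbert space H, and λ, ε > 0. For any f ∈ H lying in the spectral subspace of S corresponding to [ε, ∞) (i.e. F_ε^⊥ f = f, where F_ε projects onto the part of the spectrum below ε), one has ‖(S+λI)^{1/2} f‖ ≤ (1 + √(λ/ε)) · √(1 + λ/ε) · ‖(S+λI)^{-1/2} S f‖. -/

import Mathlib

set_option maxHeartbeats 1000000

open scoped InnerProductSpace ComplexConjugate
open ContinuousLinearMap Real

/-- Let `S` be a bounded nonnegative self-adjoint operator on a Hilbert
space, `λ, ε > 0`, and let `f` lie in the spectral subspace of `S` for `[ε, ∞)`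
(equivalently, `g(S) f = 0` for every continuous `g` vanishing on `[ε, ∞)`).  Then
`‖(S+λI)^{1/2} f‖ ≤ (1 + √(λ/ε)) √(1 + λ/ε) ‖(S+λI)^{-1/2} S f‖`. -/
theorem stmt_11 {H : Type*} [NormedAddCommGroup H] [InnerProductSpace ℂ H]
    [CompleteSpace H] (S : H →L[ℂ] H) (hS : 0 ≤ S)
    (lam ε : ℝ) (hlam : 0 < lam) (hε : 0 < ε) (f : H)
    (hf : ∀ g : ℝ → ℝ, Continuous g → (∀ x, ε ≤ x → g x = 0) → cfc g S f = 0) :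
    ‖cfc (fun x : ℝ => Real.sqrt (x + lam)) S f‖ ≤
      (1 + Real.sqrt (lam / ε)) * Real.sqrt (1 + lam / ε) *
        ‖cfc (fun x : ℝ => (x + lam) ^ (-(1/2 : ℝ))) S (S f)‖ := by
  have hSA : IsSelfAdjoint S := hS.isSelfAdjoint
  set C : ℝ := (1 + Real.sqrt (lam / ε)) * Real.sqrt (1 + lam / ε) with hCdef
  -- scalar facts
  have hC0 : 0 ≤ C := by positivity
  have hC1 : 1 + lam / ε ≤ C := by
    have h1 : Real.sqrt (lam / ε) ^ 2 = lam / ε := Real.sq_sqrt (by positivity)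
    have h2 : Real.sqrt (1 + lam / ε) ^ 2 = 1 + lam / ε := Real.sq_sqrt (by positivity)
    nlinarith [Real.sqrt_nonneg (lam / ε), Real.sqrt_nonneg (1 + lam / ε)]
  have hkey : ∀ y : ℝ, ε ≤ y → y + lam ≤ C * y := by
    intro y hy
    have h1 : lam / ε * ε ≤ lam / ε * y :=
      mul_le_mul_of_nonneg_left hy (le_of_lt (div_pos hlam hε))
    have h2 : lam / ε * ε = lam := by field_simp
    have h3 : (1 + lam / ε) * y ≤ C * y :=
      mul_le_mul_of_nonneg_right hC1 (le_trans hε.le hy)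
    nlinarith
  -- the modified functions
  set a : ℝ → ℝ := fun x => Real.sqrt (x + lam) with ha
  set a₁ : ℝ → ℝ := fun x => Real.sqrt (max x ε + lam) with ha₁
  set b₁ : ℝ → ℝ := fun x => max x ε * (Real.sqrt (max x ε + lam))⁻¹ with hb₁
  set r' : ℝ → ℝ := fun x => (Real.sqrt (max x 0 + lam))⁻¹ with hr'
  have hcs : Continuous fun x : ℝ => Real.sqrt (max x ε + lam) :=
    Real.continuous_sqrt.comp ((continuous_id.max continuous_const).add continuous_const)
  have hcs0 : Continuous fun x : ℝ => Real.sqrt (max x 0 + lam) :=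
    Real.continuous_sqrt.comp ((continuous_id.max continuous_const).add continuous_const)
  have hpos : ∀ x : ℝ, 0 < Real.sqrt (max x ε + lam) := fun x =>
    Real.sqrt_pos.mpr (by positivity)
  have hpos0 : ∀ x : ℝ, 0 < Real.sqrt (max x 0 + lam) := fun x =>
    Real.sqrt_pos.mpr (by positivity)
  have hca : Continuous a := Real.continuous_sqrt.comp (continuous_id.add continuous_const)
  have hca₁ : Continuous a₁ := hcs
  have hcb₁ : Continuous b₁ :=
    (continuous_id.max continuous_const).mul
      (hcs.inv₀ fun x => (hpos x).ne')
  have hcr' : Continuous r' := hcs0.inv₀ fun x => (hpos0 x).ne'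
  have hspec : ∀ x ∈ spectrum ℝ S, (0 : ℝ) ≤ x := fun x hx =>
    spectrum_nonneg_of_nonneg hS hx
  -- Step 1 : LHS function replacement
  have h1 : cfc a S f = cfc a₁ S f := by
    have hv : cfc (fun x => a x - a₁ x) S f = 0 := by
      apply hf _ (hca.sub hca₁)
      intro x hx
      simp only [Pi.sub_apply, ha, ha₁, max_eq_left hx, sub_self]
    rw [cfc_sub a a₁ S hca.continuousOn hca₁.continuousOn] at hv
    rw [ContinuousLinearMap.sub_apply] at hv
    exact sub_eq_zero.mp hv
  -- Step 2 : RHS rewriting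
  have h2 : cfc (fun x : ℝ => (x + lam) ^ (-(1/2 : ℝ))) S (S f) = cfc b₁ S f := by
    have e1 : cfc (fun x : ℝ => (x + lam) ^ (-(1/2 : ℝ))) S = cfc r' S := by
      apply cfc_congr
      intro x hx
      have hx0 := hspec x hx
      have hxl : (0 : ℝ) < x + lam := by linarith
      simp only [hr', max_eq_left hx0, Real.rpow_neg hxl.le, Real.sqrt_eq_rpow]
    have e2 : cfc r' S (S f) = cfc (fun x => r' x * x) S f := by
      have := cfc_mul r' (fun x : ℝ => x) S hcr'.continuousOn continuous_id.continuousOn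
      rw [this, cfc_id' ℝ S, ContinuousLinearMap.mul_apply]
    have e3 : cfc (fun x => r' x * x) S f = cfc b₁ S f := by
      have hv : cfc (fun x => r' x * x - b₁ x) S f = 0 := by
        apply hf _ (((hcr').mul continuous_id).sub hcb₁)
        intro x hx
        have hx0 : (0 : ℝ) ≤ x := le_trans hε.le hx
        simp only [Pi.sub_apply, Pi.mul_apply, hr', hb₁, max_eq_left hx0, max_eq_left hx, id_eq,
          add_comm lam x]
        ring
      rw [cfc_sub (fun x => r' x * x) b₁ S ((hcr'.mul continuous_id').continuousOn)
        hcb₁.continuousOn, ContinuousLinearMap.sub_apply] at hv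
      exact sub_eq_zero.mp hv
    rw [e1, e2, e3]
  rw [h1, h2]
  -- Step 3 : the operator inequality
  set A : H →L[ℂ] H := cfc a₁ S with hA
  set D : H →L[ℂ] H := cfc (fun x => C * b₁ x) S with hD
  have hcD : Continuous fun x => C * b₁ x := continuous_const.mul hcb₁
  have hmono : A * A ≤ D * D := by
    rw [hA, hD, ← cfc_mul a₁ a₁ S hca₁.continuousOn hca₁.continuousOn,
      ← cfc_mul _ _ S hcD.continuousOn hcD.continuousOn]
    refine cfc_mono ?_ ((hca₁.mul hca₁).continuousOn) ((hcD.mul hcD).continuousOn)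
    intro x _
    set y : ℝ := max x ε with hy
    have hyε : ε ≤ y := le_max_right x ε
    have hyl : (0 : ℝ) ≤ y + lam := by positivity
    have hy0 : (0 : ℝ) ≤ y := le_trans hε.le hyε
    have hsq : a₁ x * a₁ x = y + lam := Real.mul_self_sqrt hyl
    have hrw : C * b₁ x * (C * b₁ x)
        = C * y * (C * y) * (Real.sqrt (y + lam) * Real.sqrt (y + lam))⁻¹ := by
      simp only [hb₁]
      ring
    rw [hsq, hrw, Real.mul_self_sqrt hyl, ← div_eq_mul_inv,
      le_div_iff₀ (by positivity)]
    exact mul_self_le_mul_self hyl (hkey y hyε)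
  have hAsa : IsSelfAdjoint A := cfc_predicate a₁ S
  have hDsa : IsSelfAdjoint D := cfc_predicate _ S
  have hApos := (ContinuousLinearMap.le_def (A * A) (D * D)).mp hmono
  have hsq : ∀ (T : H →L[ℂ] H), IsSelfAdjoint T →
      ‖T f‖ ^ 2 = RCLike.re ⟪(T * T) f, f⟫_ℂ := by
    intro T hT
    have e : ⟪(T * T) f, f⟫_ℂ = ⟪T f, T f⟫_ℂ := by
      rw [ContinuousLinearMap.mul_apply]
      nth_rewrite 1 [← hT.adjoint_eq]
      exact ContinuousLinearMap.adjoint_inner_left T f (T f)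
    rw [e]
    exact (inner_self_eq_norm_sq (T f)).symm
  have hineq : ‖A f‖ ^ 2 ≤ ‖D f‖ ^ 2 := by
    rw [hsq A hAsa, hsq D hDsa]
    have := hApos.inner_nonneg_left f
    rw [ContinuousLinearMap.sub_apply, inner_sub_left] at this
    have h' : (0:ℝ) ≤ RCLike.re (⟪(D * D) f, f⟫_ℂ - ⟪(A * A) f, f⟫_ℂ) :=
      (Complex.nonneg_iff.mp this).1
    rw [map_sub] at h'
    linarith
  have hAD : ‖A f‖ ≤ ‖D f‖ := by
    nlinarith [norm_nonneg (A f), norm_nonneg (D f), hineq]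
  have hDval : ‖D f‖ = C * ‖cfc b₁ S f‖ := by
    rw [hD, show (fun x => C * b₁ x) = fun x => C • b₁ x from rfl,
      cfc_smul C b₁ S hcb₁.continuousOn]
    rw [ContinuousLinearMap.smul_apply, norm_smul, Real.norm_eq_abs, abs_of_nonneg hC0]
  calc ‖A f‖ ≤ ‖D f‖ := hAD
    _ = C * ‖cfc b₁ S f‖ := hDval
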